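/- For n = 2 (so N = 4), the 2-qubit state Ψ₁ = (1/√2)(e_0 + e_1) (i.e. (|00⟩+|01⟩)/√2) is separable, its quantum Fourier transform equals Ψ₂ = (1/(2√2))(2·e_0 + (1+i)·e_1 + (1−i)·e_3), and Ψ₂ is NOT separable. -/

import Mathlib

open scoped BigOperators

noncomputable section

/-- `bit n i x` is the i-th binary digit of `x`, counted from the most significant. -/
def bit (n : ℕ) (i : Fin n) (x : Fin (2^n)) : Fin 2 :=
  ⟨((x : ℕ) / 2^(n - 1 - (i : ℕ))) % 2, Nat.mod_lt _ (by norm_num)⟩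

/-- An n-qubit state is separable if its amplitudes factor as a product over the qubits. -/
def Separable (n : ℕ) (ψ : Fin (2^n) → ℂ) : Prop :=
  ∃ v : Fin n → Fin 2 → ℂ, ∀ x, ψ x = ∏ i, v i (bit n i x)

/-- The periodic state with shift `l` and period `r`:
amplitude `1/√A` at `x = l + i·r` for `0 ≤ i < A`, with `A = ⌈(2^n - l)/r⌉`. -/
def periodicState (n l r : ℕ) : Fin (2^n) → ℂ := fun x =>
  if ∃ i < (2^n - l + r - 1) / r, (x : ℕ) = l + i * r
  then (1 : ℂ) / Real.sqrt (((2^n - l + r - 1) / r : ℕ)) else 0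

/-- Quantum Fourier transform of an n-qubit state. -/
def QFT (n : ℕ) (ψ : Fin (2^n) → ℂ) : Fin (2^n) → ℂ := fun y =>
  (1 / (Real.sqrt (2^n) : ℝ) : ℂ) * ∑ x : Fin (2^n),
    Complex.exp (2 * Real.pi * Complex.I * (x : ℕ) * (y : ℕ) / ((2^n : ℕ) : ℂ)) * ψ x

/-- The generalized GHZ state. -/
def GHZ (n : ℕ) : Fin (2^n) → ℂ := fun x =>
  if (x : ℕ) = 0 ∨ (x : ℕ) = 2^n - 1 then (1 : ℂ) / Real.sqrt 2 else 0

/-- SLOCC equivalence of two n-qubit states. -/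
def SLOCCEquiv (n : ℕ) (ψ φ : Fin (2^n) → ℂ) : Prop :=
  ∃ (g : Fin n → Matrix (Fin 2) (Fin 2) ℂ) (c : ℂ),
    c ≠ 0 ∧ (∀ i, IsUnit (g i)) ∧
    ∀ x, φ x = c * ∑ y : Fin (2^n), (∏ i, g i (bit n i x) (bit n i y)) * ψ y

/-- `Ψ₁ = (|00⟩+|01⟩)/√2` is separable, its QFT equals
`Ψ₂ = (1/(2√2))(2e₀ + (1+i)e₁ + (1−i)e₃)`, and `Ψ₂` is not separable. -/
theorem stmt_15 :
    Separable 2 (fun x : Fin (2^2) =>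
      if (x : ℕ) = 0 ∨ (x : ℕ) = 1 then (1 : ℂ) / Real.sqrt 2 else 0) ∧
    (∀ y : Fin (2^2),
      QFT 2 (fun x => if (x : ℕ) = 0 ∨ (x : ℕ) = 1 then (1 : ℂ) / Real.sqrt 2 else 0) y =
        ((1 / (2 * Real.sqrt 2) : ℝ) : ℂ) *
          (if (y : ℕ) = 0 then 2 else if (y : ℕ) = 1 then 1 + Complex.I
           else if (y : ℕ) = 3 then 1 - Complex.I else 0)) ∧
    ¬ Separable 2 (fun y : Fin (2^2) =>
        ((1 / (2 * Real.sqrt 2) : ℝ) : ℂ) *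
          (if (y : ℕ) = 0 then 2 else if (y : ℕ) = 1 then 1 + Complex.I
           else if (y : ℕ) = 3 then 1 - Complex.I else 0)) := by
  have hs2 : ((Real.sqrt 2 : ℝ) : ℂ) * ((Real.sqrt 2 : ℝ) : ℂ) = 2 := by
    norm_cast; rw [Real.mul_self_sqrt]; norm_num
  have hs2ne : ((Real.sqrt 2 : ℝ) : ℂ) ≠ 0 := by
    intro h
    rw [h, mul_zero] at hs2
    exact two_ne_zero hs2.symm
  refine ⟨?_, ?_, ?_⟩
  · refine ⟨![![1, 0], ![(1:ℂ)/Real.sqrt 2, (1:ℂ)/Real.sqrt 2]], ?_⟩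
    intro x
    fin_cases x <;>
      simp [bit, Fin.prod_univ_two, Matrix.cons_val_zero, Matrix.cons_val_one]
  · intro y
    have hexp : Complex.exp ((Real.pi/2 : ℝ) * Complex.I) = Complex.I := by
      rw [Complex.exp_mul_I, ← Complex.ofReal_cos, ← Complex.ofReal_sin,
        Real.cos_pi_div_two, Real.sin_pi_div_two]; simp
    have hexp2 : Complex.exp ((Real.pi : ℝ) * Complex.I) = -1 := Complex.exp_pi_mul_I
    have hexp3 : Complex.exp ((3*Real.pi/2 : ℝ) * Complex.I) = -Complex.I := by
      have h : ((3*Real.pi/2 : ℝ) : ℂ) * Complex.I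
          = (Real.pi : ℝ) * Complex.I + (Real.pi/2 : ℝ) * Complex.I := by
        push_cast; ring
      rw [h, Complex.exp_add, hexp, hexp2]; ring
    have hsq4 : Real.sqrt 4 = 2 := by
      rw [show (4:ℝ) = 2^2 by norm_num]; exact Real.sqrt_sq (by norm_num)
    have h3c : ((3 : Fin (2^2)) : ℕ) = 3 := rfl
    have hsum : ∀ f : Fin (2^2) → ℂ, ∑ x : Fin (2^2), f x = f 0 + f 1 + f 2 + f 3 :=
      fun f => Fin.sum_univ_four f
    simp only [QFT]
    rw [hsum]
    fin_cases y
    · norm_num [h3c, hsq4]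
      field_simp
      norm_num
    · norm_num [h3c, hsq4]
      rw [show (2 * (Real.pi:ℂ) * Complex.I / 4) = ((Real.pi/2 : ℝ) : ℂ) * Complex.I by
        push_cast; ring, hexp]
      field_simp
    · norm_num [h3c, hsq4]
      rw [show (2 * (Real.pi:ℂ) * Complex.I * 2 / 4) = ((Real.pi : ℝ) : ℂ) * Complex.I by
        ring, hexp2]
      ring
    · norm_num [h3c, hsq4]
      rw [show (2 * (Real.pi:ℂ) * Complex.I * 3 / 4) = ((3*Real.pi/2 : ℝ) : ℂ) * Complex.I by
        push_cast; ring, hexp3]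
      field_simp
      ring
  · rintro ⟨v, hv⟩
    have h0 := hv 0
    have h1 := hv 1
    have h2 := hv 2
    have h3 := hv 3
    simp only [Fin.prod_univ_two, Fin.isValue] at h0 h1 h2 h3
    norm_num [show bit 2 0 (0 : Fin (2^2)) = 0 from rfl,
      show bit 2 1 (0 : Fin (2^2)) = 0 from rfl,
      show bit 2 0 (1 : Fin (2^2)) = 0 from rfl,
      show bit 2 1 (1 : Fin (2^2)) = 1 from rfl,
      show bit 2 0 (2 : Fin (2^2)) = 1 from rfl,
      show bit 2 1 (2 : Fin (2^2)) = 0 from rfl,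
      show bit 2 0 (3 : Fin (2^2)) = 1 from rfl,
      show bit 2 1 (3 : Fin (2^2)) = 1 from rfl,
      show ((0:Fin (2^2)):ℕ) = 0 from rfl, show ((1:Fin (2^2)):ℕ) = 1 from rfl,
      show ((2:Fin (2^2)):ℕ) = 2 from rfl, show ((3:Fin (2^2)):ℕ) = 3 from rfl] at h0 h1 h2 h3
    have hIne : (1:ℂ) - Complex.I ≠ 0 := by
      simp [sub_eq_zero, Complex.ext_iff]
    have hne3 : ((Real.sqrt 2 : ℝ) : ℂ)⁻¹ * (1/2) * ((1:ℂ) - Complex.I) ≠ 0 :=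
      mul_ne_zero (mul_ne_zero (inv_ne_zero hs2ne) (by norm_num)) hIne
    have h10 : v 1 0 = 0 := by
      rcases h2 with h' | h'
      · exact absurd (by rw [h3, h', zero_mul]) hne3
      · exact h'
    rw [h10, mul_zero] at h0
    exact mul_ne_zero (mul_ne_zero (inv_ne_zero hs2ne) (by norm_num)) two_ne_zero h0
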